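/- For the Leibniz algebra M₁(k) with 2k-2 ≥ n, the linear map h₂ defined by h₂(y₁) = yₙ, h₂(yᵢ) = (i-1)·y_{k+i-2} for 2 ≤ i ≤ n-k+1, and h₂(yᵢ) = 0 otherwise, is a derivation of M₁(k). -/
import Mathlib

/-- For M₁(k) with 2k-2 ≥ n, the map h₂ with h₂(y₁) = yₙ,
h₂(yᵢ) = (i-1)·y_{k+i-2} for 2 ≤ i ≤ n-k+1, h₂(yᵢ) = 0 otherwise,
is a derivation. -/
theorem M1k_h2_is_derivation
    (n k : ℕ) (hn : 4 ≤ n) (hk3 : 3 ≤ k) (hkn : k ≤ n - 1) (hk2 : n ≤ 2 * k - 2)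
    (V : Type*) [AddCommGroup V] [Module ℂ V]
    (y : ℕ → V)
    (hindep : LinearIndependent ℂ (fun i : Fin n => y (i.val + 1)))
    (hspan : Submodule.span ℂ (Set.range (fun i : Fin n => y (i.val + 1))) = ⊤)
    (B : V →ₗ[ℂ] V →ₗ[ℂ] V)
    (h1 : ∀ i, 1 ≤ i → i ≤ n - 2 → B (y i) (y 1) = y (i + 1))
    (h2 : ∀ i, 1 ≤ i → i ≤ n - k → B (y i) (y n) = y (k + i - 1))
    (h0 : ∀ i j, 1 ≤ i → i ≤ n → 1 ≤ j → j ≤ n →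
      ¬(j = 1 ∧ i ≤ n - 2) → ¬(j = n ∧ i ≤ n - k) → B (y i) (y j) = 0)
    (H2 : V →ₗ[ℂ] V)
    (hH1 : H2 (y 1) = y n)
    (hHi : ∀ i, 2 ≤ i → i ≤ n - k + 1 → H2 (y i) = ((i : ℂ) - 1) • y (k + i - 2))
    (hHz : ∀ i, 1 ≤ i → i ≤ n → i ≠ 1 → ¬(2 ≤ i ∧ i ≤ n - k + 1) → H2 (y i) = 0) :
    ∀ x z : V, H2 (B x z) = B (H2 x) z + B x (H2 z) := by
  have key : ∀ i j, 1 ≤ i → i ≤ n → 1 ≤ j → j ≤ n →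
      H2 (B (y i) (y j)) = B (H2 (y i)) (y j) + B (y i) (H2 (y j)) := by
    intro i j hi1 hin hj1 hjn
    by_cases hj : j = 1
    · subst hj
      by_cases hile : i ≤ n - 2
      · rw [h1 i hi1 hile]
        by_cases hione : i = 1
        · subst hione
          rw [hH1, hHi 2 (by omega) (by omega),
            h0 n 1 (by omega) (by omega) (by omega) (by omega) (by omega) (by omega),
            h2 1 (by omega) (by omega)]
          have e1 : k + 2 - 2 = k := by omega
          have e2 : k + 1 - 1 = k := by omega
          rw [e1, e2]
          norm_num
        · by_cases hik : i ≤ n - k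
          · rw [hHi (i+1) (by omega) (by omega), hHi i (by omega) (by omega), hH1,
              map_smul, LinearMap.smul_apply, h1 (k+i-2) (by omega) (by omega),
              h2 i hi1 hik]
            have e1 : k + (i+1) - 2 = k + i - 1 := by omega
            have e2 : k + i - 2 + 1 = k + i - 1 := by omega
            rw [e1, e2]
            push_cast
            module
          · rw [hHz (i+1) (by omega) (by omega) (by omega) (by omega), hH1,
              h0 i n hi1 hin (by omega) le_rfl (by omega) (by omega)]
            by_cases hik1 : i ≤ n - k + 1
            · rw [hHi i (by omega) hik1, map_smul, LinearMap.smul_apply,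
                h0 (k+i-2) 1 (by omega) (by omega) (by omega) (by omega) (by omega) (by omega)]
              simp
            · rw [hHz i hi1 hin (by omega) (by omega)]
              simp
      · rw [h0 i 1 hi1 hin (by omega) (by omega) (by omega) (by omega),
          hHz i hi1 hin (by omega) (by omega), hH1,
          h0 i n hi1 hin (by omega) le_rfl (by omega) (by omega)]
        simp
    · by_cases hjn' : j = n
      · subst j
        have hH2n : H2 (y n) = 0 := hHz n (by omega) le_rfl (by omega) (by omega)
        by_cases hik : i ≤ n - k
        · rw [h2 i hi1 hik, hHz (k+i-1) (by omega) (by omega) (by omega) (by omega), hH2n]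
          by_cases hione : i = 1
          · subst hione
            rw [hH1, h0 n n (by omega) le_rfl (by omega) le_rfl (by omega) (by omega)]
            simp
          · rw [hHi i (by omega) (by omega), map_smul, LinearMap.smul_apply,
              h0 (k+i-2) n (by omega) (by omega) (by omega) le_rfl (by omega) (by omega)]
            simp
        · rw [h0 i n hi1 hin (by omega) le_rfl (by omega) (by omega), hH2n]
          by_cases hik1 : i ≤ n - k + 1
          · rw [hHi i (by omega) hik1, map_smul, LinearMap.smul_apply,
              h0 (k+i-2) n (by omega) (by omega) (by omega) le_rfl (by omega) (by omega)]
            simp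
          · rw [hHz i hi1 hin (by omega) (by omega)]
            simp
      · rw [h0 i j hi1 hin hj1 hjn (by omega) (by omega)]
        have t1 : B (H2 (y i)) (y j) = 0 := by
          by_cases hione : i = 1
          · subst hione
            rw [hH1, h0 n j (by omega) le_rfl hj1 hjn (by omega) (by omega)]
          · by_cases hik1 : 2 ≤ i ∧ i ≤ n - k + 1
            · rw [hHi i hik1.1 hik1.2, map_smul, LinearMap.smul_apply,
                h0 (k+i-2) j (by omega) (by omega) hj1 hjn (by omega) (by omega)]
              simp
            · rw [hHz i hi1 hin hione hik1]
              simp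
        have t2 : B (y i) (H2 (y j)) = 0 := by
          by_cases hjk1 : 2 ≤ j ∧ j ≤ n - k + 1
          · rw [hHi j hjk1.1 hjk1.2, map_smul,
              h0 i (k+j-2) hi1 hin (by omega) (by omega) (by omega) (by omega)]
            simp
          · rw [hHz j hj1 hjn hj hjk1]
            simp
        rw [t1, t2]
        simp
  have main : B.compr₂ H2 = (B ∘ₗ H2) + B.compl₂ H2 := by
    apply LinearMap.ext_on hspan
    rintro x ⟨i, rfl⟩
    apply LinearMap.ext_on hspan
    rintro z ⟨j, rfl⟩
    simpa using key (i.val+1) (j.val+1) (by omega) (by omega) (by omega) (by omega)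
  intro x z
  simpa using LinearMap.congr_fun (LinearMap.congr_fun main x) z
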